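/- Let d ≥ 2, let g ∈ L²(ℝ), let Δ ⊂ ℝ × ℝ be an arbitrary countable set, let Q ⊂ S^{d−1} be a finite set, and let ε > 0. Then there exists a Schwartz function f on ℝ^d with support contained in B_ε(0) and ‖f‖₂ = 1 such that ⟨f, g_{m,n,u}⟩ = 0 for all (m,n) ∈ Δ and u ∈ Q. Consequently, the system {g_{m,n,u}}_{(m,n,u)∈Δ×Q} is not a frame — indeed not even a Bessel system — for any subspace of L²(ℝ^d) containing all Schwartz functions supported in B_ε(0). -/

import Mathlib

open MeasureTheory Real Complex

noncomputable section

/-- The directional Gabor coefficient `⟨f, g_{m,n,u}⟩`. -/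
def gaborCoef {d : ℕ} (f : EuclideanSpace ℝ (Fin d) → ℂ) (g : ℝ → ℂ)
    (m n : ℝ) (u : EuclideanSpace ℝ (Fin d)) : ℂ :=
  ∫ x : EuclideanSpace ℝ (Fin d),
    f x * Complex.exp ((-(2 * Real.pi * m * (inner ℝ u x : ℝ)) : ℝ) * Complex.I) *
      (starRingEnd ℂ) (g ((inner ℝ u x : ℝ) - n))

section Aux

open Set
open scoped ENNReal NNReal

lemma gabor_coord_le_norm {k : ℕ} (y : EuclideanSpace ℝ (Fin (k+1))) (i : Fin (k+1)) :
    |y i| ≤ ‖y‖ := by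
  rw [EuclideanSpace.norm_eq, ← Real.sqrt_sq_eq_abs]
  apply Real.sqrt_le_sqrt
  simpa [Real.norm_eq_abs, sq_abs] using
    Finset.single_le_sum (f := fun j => ‖y j‖ ^ 2) (fun j _ => sq_nonneg _) (Finset.mem_univ i)

lemma gabor_onb_ext {k : ℕ} (u : EuclideanSpace ℝ (Fin (k+1))) (hu : ‖u‖ = 1) :
    ∃ b : OrthonormalBasis (Fin (k+1)) ℝ (EuclideanSpace ℝ (Fin (k+1))), b 0 = u := by
  have hcard : Module.finrank ℝ (EuclideanSpace ℝ (Fin (k+1))) = Fintype.card (Fin (k+1)) := by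
    simp [finrank_euclideanSpace_fin]
  have horth : Orthonormal ℝ (({0} : Set (Fin (k+1))).restrict (fun _ => u)) := by
    constructor
    · intro i; exact hu
    · intro i j hij
      exact absurd (Subtype.ext (i.2.trans j.2.symm)) hij
  obtain ⟨b, hb⟩ := horth.exists_orthonormalBasis_extension_of_card_eq hcard
  exact ⟨b, hb 0 rfl⟩

lemma gabor_lint_slice {k : ℕ} (b : OrthonormalBasis (Fin (k+1)) ℝ (EuclideanSpace ℝ (Fin (k+1))))
    (G : ℝ → ℝ≥0∞) (hG : Measurable G) (R : ℝ) :
    ∫⁻ x in Metric.closedBall (0 : EuclideanSpace ℝ (Fin (k+1))) R, G (b.repr x 0)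
      ≤ (∫⁻ t in Set.Icc (-R) R, G t) * (volume (Set.Icc (-R) (R:ℝ)))^k := by
  have hGm : Measurable fun x : EuclideanSpace ℝ (Fin (k+1)) => G (b.repr x 0) :=
    hG.comp (by fun_prop)
  rw [← lintegral_indicator measurableSet_closedBall]
  -- step 1 : compose with b.repr.symm
  have h1 : ∫⁻ x, (Metric.closedBall (0 : EuclideanSpace ℝ (Fin (k+1))) R).indicator
        (fun x => G (b.repr x 0)) x
      = ∫⁻ y : EuclideanSpace ℝ (Fin (k+1)),
          ({y : EuclideanSpace ℝ (Fin (k+1)) | ‖y‖ ≤ R}).indicator (fun y => G (y 0)) y := by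
    rw [← b.measurePreserving_repr_symm.lintegral_comp
      (hGm.indicator measurableSet_closedBall)]
    congr 1
    ext y
    by_cases hy : ‖y‖ ≤ R
    · rw [Set.indicator_of_mem (show y ∈ {y : EuclideanSpace ℝ (Fin (k+1)) | ‖y‖ ≤ R} from hy),
        Set.indicator_of_mem]
      · simp
      · simpa [Metric.mem_closedBall, dist_zero_right] using hy
    · rw [Set.indicator_of_notMem
          (show y ∉ {y : EuclideanSpace ℝ (Fin (k+1)) | ‖y‖ ≤ R} from hy),
        Set.indicator_of_notMem]
      simpa [Metric.mem_closedBall, dist_zero_right] using hy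
  rw [h1]
  -- step 2: bound by the box indicator, viewing Euclidean space as a Pi type via defeq
  set Box : Set (Fin (k+1) → ℝ) := Set.pi Set.univ (fun _ => Set.Icc (-R) R) with hBoxdef
  have hBoxm : MeasurableSet Box := MeasurableSet.univ_pi (fun _ => measurableSet_Icc)
  have hproj : Measurable fun z : Fin (k+1) → ℝ => G (z 0) := hG.comp (measurable_pi_apply 0)
  have h3 : ∫⁻ y : EuclideanSpace ℝ (Fin (k+1)),
        ({y : EuclideanSpace ℝ (Fin (k+1)) | ‖y‖ ≤ R}).indicator (fun y => G (y 0)) y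
      ≤ ∫⁻ y : EuclideanSpace ℝ (Fin (k+1)), Box.indicator (fun z : Fin (k+1) → ℝ => G (z 0))
          (((MeasurableEquiv.toLp 2 (Fin (k+1) → ℝ)).symm) y) := by
    apply lintegral_mono
    intro y
    simp only [Set.indicator_apply]
    by_cases hy : ‖y‖ ≤ R
    · rw [if_pos (show y ∈ {y : EuclideanSpace ℝ (Fin (k+1)) | ‖y‖ ≤ R} from hy)]
      have hmem : ((MeasurableEquiv.toLp 2 (Fin (k+1) → ℝ)).symm) y ∈ Box := by
        intro i _
        have := (abs_le.mp ((gabor_coord_le_norm y i).trans hy))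
        exact ⟨this.1, this.2⟩
      rw [Set.indicator_of_mem hmem]
      exact le_refl _
    · rw [if_neg (show y ∉ {y : EuclideanSpace ℝ (Fin (k+1)) | ‖y‖ ≤ R} from hy)]
      exact zero_le
  refine h3.trans ?_
  -- step 3 : transfer to the Pi space
  have h4 : ∫⁻ y : EuclideanSpace ℝ (Fin (k+1)), Box.indicator
        (fun z : Fin (k+1) → ℝ => G (z 0)) (((MeasurableEquiv.toLp 2 (Fin (k+1) → ℝ)).symm) y)
      = ∫⁻ z : Fin (k+1) → ℝ, Box.indicator (fun z : Fin (k+1) → ℝ => G (z 0)) z :=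
    (EuclideanSpace.volume_preserving_symm_measurableEquiv_toLp (Fin (k+1))).lintegral_comp
      (hproj.indicator hBoxm)
  rw [h4]
  -- step 4 : split off the first coordinate
  have hsplit := ((MeasureTheory.volume_preserving_piFinSuccAbove
      (fun _ : Fin (k+1) => ℝ) 0).symm
        (MeasurableEquiv.piFinSuccAbove (fun _ => ℝ) 0)).lintegral_comp
      (hproj.indicator hBoxm)
  rw [← hsplit]
  have hpoint : ∀ p : ℝ × (Fin k → ℝ),
      Box.indicator (fun z : Fin (k+1) → ℝ => G (z 0))
        ((MeasurableEquiv.piFinSuccAbove (fun _ : Fin (k+1) => ℝ) 0).symm p)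
      = (Set.Icc (-R) R).indicator G p.1 *
        (Set.pi Set.univ (fun _ : Fin k => Set.Icc (-R) R)).indicator 1 p.2 := by
    rintro ⟨t, w⟩
    have hsymm : ((MeasurableEquiv.piFinSuccAbove (fun _ : Fin (k+1) => ℝ) 0).symm (t, w))
        = Fin.insertNth 0 t w := rfl
    have hmem : (Fin.insertNth (0 : Fin (k+1)) t w ∈ Box)
        ↔ (t ∈ Set.Icc (-R) R ∧ w ∈ Set.pi Set.univ (fun _ : Fin k => Set.Icc (-R) R)) := by
      simp only [hBoxdef, Set.mem_pi, Set.mem_univ, forall_true_left]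
      rw [Fin.forall_iff_succAbove (0 : Fin (k+1))]
      simp [Fin.insertNth_apply_same, Fin.insertNth_apply_succAbove]
    rw [hsymm]
    by_cases h : Fin.insertNth (0 : Fin (k+1)) t w ∈ Box
    · obtain ⟨ht, hw⟩ := hmem.mp h
      rw [Set.indicator_of_mem h, Set.indicator_of_mem ht, Set.indicator_of_mem hw]
      simp [Fin.insertNth_apply_same]
    · rw [Set.indicator_of_notMem h]
      rcases not_and_or.mp (fun hc => h (hmem.mpr hc)) with ht | hw
      · rw [Set.indicator_of_notMem ht, zero_mul]
      · rw [Set.indicator_of_notMem hw, mul_zero]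
  simp only [hpoint]
  rw [MeasureTheory.Measure.volume_eq_prod]
  rw [MeasureTheory.lintegral_prod_mul ((hG.indicator measurableSet_Icc).aemeasurable)
    ((measurable_one.indicator (MeasurableSet.univ_pi (fun _ => measurableSet_Icc))).aemeasurable)]
  rw [lintegral_indicator measurableSet_Icc, lintegral_indicator_one
    (MeasurableSet.univ_pi (fun _ => measurableSet_Icc))]
  apply le_of_eq
  congr 1
  rw [volume_pi_pi]
  simp

/-- Integrability of the Gabor integrand against a compactly supported bounded function. -/
lemma gabor_integrable_kernel {k : ℕ} (u : EuclideanSpace ℝ (Fin (k+1))) (hu : ‖u‖ = 1)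
    (g' : ℝ → ℂ) (hg'm : StronglyMeasurable g') (hg' : MemLp g' 2 volume)
    (h : EuclideanSpace ℝ (Fin (k+1)) → ℂ) (hh : Continuous h) (hsupp : HasCompactSupport h)
    (m n : ℝ)
    (b : OrthonormalBasis (Fin (k+1)) ℝ (EuclideanSpace ℝ (Fin (k+1)))) (hb : b 0 = u) :
    Integrable (fun x : EuclideanSpace ℝ (Fin (k+1)) => h x *
      Complex.exp ((-(2 * Real.pi * m * (inner ℝ u x : ℝ)) : ℝ) * Complex.I) *
      (starRingEnd ℂ) (g' ((inner ℝ u x : ℝ) - n))) volume := by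
  have hL : Continuous fun x : EuclideanSpace ℝ (Fin (k+1)) => (inner ℝ u x : ℝ) :=
    continuous_const.inner continuous_id
  have hinner : ∀ x : EuclideanSpace ℝ (Fin (k+1)), (inner ℝ u x : ℝ) = b.repr x 0 := by
    intro x
    rw [OrthonormalBasis.repr_apply_apply, hb, real_inner_comm]
  have haesm : AEStronglyMeasurable (fun x : EuclideanSpace ℝ (Fin (k+1)) => h x *
      Complex.exp ((-(2 * Real.pi * m * (inner ℝ u x : ℝ)) : ℝ) * Complex.I) *
      (starRingEnd ℂ) (g' ((inner ℝ u x : ℝ) - n))) volume := by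
    apply AEStronglyMeasurable.mul
    apply AEStronglyMeasurable.mul
    · exact hh.aestronglyMeasurable
    · refine Continuous.aestronglyMeasurable ?_
      exact Complex.continuous_exp.comp
        ((Complex.continuous_ofReal.comp ((continuous_const.mul hL).neg)).mul continuous_const)
    · refine StronglyMeasurable.aestronglyMeasurable ?_
      exact (Complex.continuous_conj.comp_stronglyMeasurable
        (hg'm.comp_measurable ((hL.sub continuous_const).measurable)))
  refine ⟨haesm, ?_⟩
  obtain ⟨C, hC⟩ := hh.bounded_above_of_compact_support hsupp
  obtain ⟨R, hR⟩ := hsupp.isBounded.subset_closedBall 0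
  set G : ℝ → ℝ≥0∞ := fun t => (‖g' (t - n)‖₊ : ℝ≥0∞) with hGdef
  have hGmeas : Measurable G := by
    refine Measurable.coe_nnreal_ennreal ?_
    exact (hg'm.measurable.comp (measurable_id.sub_const n)).nnnorm
  have hbound : ∀ x : EuclideanSpace ℝ (Fin (k+1)), (‖h x *
      Complex.exp ((-(2 * Real.pi * m * (inner ℝ u x : ℝ)) : ℝ) * Complex.I) *
      (starRingEnd ℂ) (g' ((inner ℝ u x : ℝ) - n))‖₊ : ℝ≥0∞)
      ≤ (Metric.closedBall (0 : EuclideanSpace ℝ (Fin (k+1))) R).indicator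
          (fun x => (‖C‖₊ : ℝ≥0∞) * G (inner ℝ u x : ℝ)) x := by
    intro x
    by_cases hx : x ∈ Metric.closedBall (0 : EuclideanSpace ℝ (Fin (k+1))) R
    · rw [Set.indicator_of_mem hx]
      rw [nnnorm_mul, nnnorm_mul, ENNReal.coe_mul, ENNReal.coe_mul]
      have h1 : (‖Complex.exp ((-(2 * Real.pi * m * (inner ℝ u x : ℝ)) : ℝ) * Complex.I)‖₊ :
          ℝ≥0∞) = 1 := by
        have h0 := Complex.norm_exp_ofReal_mul_I (-(2 * Real.pi * m * (inner ℝ u x : ℝ)))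
        have h0' : ‖Complex.exp ((-(2 * Real.pi * m * (inner ℝ u x : ℝ)) : ℝ) * Complex.I)‖₊
            = (1 : ℝ≥0) := NNReal.coe_injective
          (by simp only [coe_nnnorm, NNReal.coe_one]; exact h0)
        rw [h0']
        simp
      rw [h1, mul_one]
      have h2 : (‖h x‖₊ : ℝ≥0∞) ≤ (‖C‖₊ : ℝ≥0∞) := by
        rw [ENNReal.coe_le_coe]
        have : ‖h x‖ ≤ ‖C‖ := (hC x).trans (le_abs_self C)
        exact this
      have h3 : (‖(starRingEnd ℂ) (g' ((inner ℝ u x : ℝ) - n))‖₊ : ℝ≥0∞)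
          = G (inner ℝ u x : ℝ) := by
        simp [hGdef]
      rw [h3]
      exact mul_le_mul_left h2 _
    · have hx0 : h x = 0 := by
        apply image_eq_zero_of_notMem_tsupport
        intro hmem
        exact hx (hR hmem)
      rw [Set.indicator_of_notMem hx]
      simp [hx0]
  calc ∫⁻ x, (‖h x *
      Complex.exp ((-(2 * Real.pi * m * (inner ℝ u x : ℝ)) : ℝ) * Complex.I) *
      (starRingEnd ℂ) (g' ((inner ℝ u x : ℝ) - n))‖₊ : ℝ≥0∞) ∂volume
      ≤ ∫⁻ x, (Metric.closedBall (0 : EuclideanSpace ℝ (Fin (k+1))) R).indicator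
          (fun x => (‖C‖₊ : ℝ≥0∞) * G (inner ℝ u x : ℝ)) x ∂volume := lintegral_mono hbound
    _ = ∫⁻ x in Metric.closedBall (0 : EuclideanSpace ℝ (Fin (k+1))) R,
          (‖C‖₊ : ℝ≥0∞) * G (inner ℝ u x : ℝ) ∂volume := by
        rw [lintegral_indicator measurableSet_closedBall]
    _ = (‖C‖₊ : ℝ≥0∞) * ∫⁻ x in Metric.closedBall (0 : EuclideanSpace ℝ (Fin (k+1))) R,
          G (inner ℝ u x : ℝ) ∂volume := by
        rw [lintegral_const_mul]
        exact hGmeas.comp (hL.measurable)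
    _ ≤ (‖C‖₊ : ℝ≥0∞) * ((∫⁻ t in Set.Icc (-R) R, G t) * (volume (Set.Icc (-R) (R:ℝ)))^k) := by
        apply mul_le_mul_right
        have : ∫⁻ x in Metric.closedBall (0 : EuclideanSpace ℝ (Fin (k+1))) R,
              G (inner ℝ u x : ℝ) ∂volume
            = ∫⁻ x in Metric.closedBall (0 : EuclideanSpace ℝ (Fin (k+1))) R,
              G (b.repr x 0) ∂volume := by
          apply lintegral_congr
          intro x
          rw [hinner]
        rw [this]
        exact gabor_lint_slice b G hGmeas R
    _ < ⊤ := by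
        apply ENNReal.mul_lt_top ENNReal.coe_lt_top
        apply ENNReal.mul_lt_top
        · have loci : LocallyIntegrable g' volume := hg'.locallyIntegrable one_le_two
          have hio : IntegrableOn g' (Set.Icc (-R-n) (R-n)) volume :=
            loci.integrableOn_isCompact isCompact_Icc
          have hind : Integrable ((Set.Icc (-R-n) (R-n)).indicator g') volume :=
            (integrable_indicator_iff measurableSet_Icc).mpr hio
          have htrans := hind.comp_sub_right n
          have heq : (fun t => (Set.Icc (-R-n) (R-n)).indicator g' (t - n))
              = (Set.Icc (-R) R).indicator (fun t => g' (t - n)) := by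
            ext t
            by_cases ht : t ∈ Set.Icc (-R) R
            · rw [Set.indicator_of_mem ht, Set.indicator_of_mem]
              simp only [Set.mem_Icc] at ht ⊢
              constructor <;> linarith [ht.1, ht.2]
            · rw [Set.indicator_of_notMem ht, Set.indicator_of_notMem]
              simp only [Set.mem_Icc] at ht ⊢
              intro hc
              exact ht ⟨by linarith [hc.1], by linarith [hc.2]⟩
          rw [heq] at htrans
          have := ((integrable_indicator_iff measurableSet_Icc).mp htrans).2
          simpa [hGdef, HasFiniteIntegral, enorm_eq_nnnorm] using this
        · exact ENNReal.pow_lt_top (by simp [Real.volume_Icc])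

/-- The translation formula for Gabor coefficients (unconditional). -/
lemma gabor_translate {d : ℕ} (h : EuclideanSpace ℝ (Fin d) → ℂ) (g' : ℝ → ℂ) (m n : ℝ)
    (u w : EuclideanSpace ℝ (Fin d)) :
    gaborCoef (fun x => h (x - w)) g' m n u
      = Complex.exp ((-(2 * Real.pi * m * (inner ℝ u w : ℝ)) : ℝ) * Complex.I) *
        gaborCoef h g' m (n - (inner ℝ u w : ℝ)) u := by
  set a : ℝ := (inner ℝ u w : ℝ) with ha
  set Φ : EuclideanSpace ℝ (Fin d) → ℂ :=
    fun y => Complex.exp ((-(2 * Real.pi * m * a) : ℝ) * Complex.I) *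
          (h y * Complex.exp ((-(2 * Real.pi * m * (inner ℝ u y : ℝ)) : ℝ) * Complex.I) *
            (starRingEnd ℂ) (g' ((inner ℝ u y : ℝ) - (n - a)))) with hΦ
  have key : ∀ x : EuclideanSpace ℝ (Fin d), h (x - w) *
      Complex.exp ((-(2 * Real.pi * m * (inner ℝ u x : ℝ)) : ℝ) * Complex.I) *
      (starRingEnd ℂ) (g' ((inner ℝ u x : ℝ) - n))
      = Φ (x - w) := by
    intro x
    rw [hΦ]
    have hx : (inner ℝ u (x - w) : ℝ) = (inner ℝ u x : ℝ) - a := by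
      rw [ha, inner_sub_right]
    simp only [hx]
    have hexp : Complex.exp ((-(2 * Real.pi * m * (inner ℝ u x : ℝ)) : ℝ) * Complex.I)
        = Complex.exp ((-(2 * Real.pi * m * a) : ℝ) * Complex.I) *
          Complex.exp ((-(2 * Real.pi * m * ((inner ℝ u x : ℝ) - a)) : ℝ) * Complex.I) := by
      rw [← Complex.exp_add]
      congr 1
      push_cast
      ring
    have harg : (inner ℝ u x : ℝ) - a - (n - a) = (inner ℝ u x : ℝ) - n := by ring
    rw [harg, hexp]
    ring
  unfold gaborCoef
  rw [integral_congr_ae (Filter.Eventually.of_forall key)]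
  rw [MeasureTheory.integral_sub_right_eq_self Φ w]
  rw [hΦ]
  rw [integral_const_mul]

/-- Linearity of Gabor coefficients in the analyzed function, under integrability. -/
lemma gabor_sub {d : ℕ} (h₁ h₂ : EuclideanSpace ℝ (Fin d) → ℂ) (g' : ℝ → ℂ) (m n : ℝ)
    (u : EuclideanSpace ℝ (Fin d))
    (hi₁ : Integrable (fun x : EuclideanSpace ℝ (Fin d) => h₁ x *
      Complex.exp ((-(2 * Real.pi * m * (inner ℝ u x : ℝ)) : ℝ) * Complex.I) *
      (starRingEnd ℂ) (g' ((inner ℝ u x : ℝ) - n))) volume)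
    (hi₂ : Integrable (fun x : EuclideanSpace ℝ (Fin d) => h₂ x *
      Complex.exp ((-(2 * Real.pi * m * (inner ℝ u x : ℝ)) : ℝ) * Complex.I) *
      (starRingEnd ℂ) (g' ((inner ℝ u x : ℝ) - n))) volume) :
    gaborCoef (fun x => h₁ x - h₂ x) g' m n u
      = gaborCoef h₁ g' m n u - gaborCoef h₂ g' m n u := by
  unfold gaborCoef
  rw [← integral_sub hi₁ hi₂]
  congr 1
  ext x
  ring

lemma gabor_qmp_inner {k : ℕ} (u : EuclideanSpace ℝ (Fin (k+1)))
    (b : OrthonormalBasis (Fin (k+1)) ℝ (EuclideanSpace ℝ (Fin (k+1)))) (hb : b 0 = u) (n : ℝ) :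
    Measure.QuasiMeasurePreserving
      (fun x : EuclideanSpace ℝ (Fin (k+1)) => (inner ℝ u x : ℝ) - n) volume volume := by
  have hfun : (fun x : EuclideanSpace ℝ (Fin (k+1)) => (inner ℝ u x : ℝ) - n)
      = (fun t : ℝ => t - n) ∘ (Prod.fst : ℝ × (Fin k → ℝ) → ℝ)
        ∘ (MeasurableEquiv.piFinSuccAbove (fun _ : Fin (k+1) => ℝ) 0)
        ∘ ((MeasurableEquiv.toLp 2 (Fin (k+1) → ℝ)).symm)
        ∘ (b.repr : EuclideanSpace ℝ (Fin (k+1)) → EuclideanSpace ℝ (Fin (k+1))) := by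
    ext x
    simp only [Function.comp_apply]
    congr 1
    have hrfl : ((MeasurableEquiv.piFinSuccAbove (fun _ : Fin (k+1) => ℝ) 0)
        (((MeasurableEquiv.toLp 2 (Fin (k+1) → ℝ)).symm) (b.repr x))).1 = b.repr x 0 := rfl
    rw [hrfl, OrthonormalBasis.repr_apply_apply, hb, real_inner_comm]
  rw [hfun]
  have q1 : Measure.QuasiMeasurePreserving
      (b.repr : EuclideanSpace ℝ (Fin (k+1)) → EuclideanSpace ℝ (Fin (k+1))) volume volume :=
    b.measurePreserving_repr.quasiMeasurePreserving
  have q2 : Measure.QuasiMeasurePreserving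
      ((MeasurableEquiv.toLp 2 (Fin (k+1) → ℝ)).symm) volume volume :=
    (EuclideanSpace.volume_preserving_symm_measurableEquiv_toLp (Fin (k+1))).quasiMeasurePreserving
  have q3 : Measure.QuasiMeasurePreserving
      (MeasurableEquiv.piFinSuccAbove (fun _ : Fin (k+1) => ℝ) 0) volume volume :=
    (MeasureTheory.volume_preserving_piFinSuccAbove (fun _ : Fin (k+1) => ℝ)
      0).quasiMeasurePreserving
  have q4 : Measure.QuasiMeasurePreserving
      (Prod.fst : ℝ × (Fin k → ℝ) → ℝ) volume volume := by
    refine ⟨measurable_fst, ?_⟩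
    rw [MeasureTheory.Measure.volume_eq_prod, MeasureTheory.Measure.map_fst_prod]
    refine Measure.AbsolutelyContinuous.mk (fun s hs h0 => ?_)
    simp [h0]
  have q5 : Measure.QuasiMeasurePreserving (fun t : ℝ => t - n) volume volume :=
    (measurePreserving_sub_right volume n).quasiMeasurePreserving
  exact q5.comp (q4.comp (q3.comp (q2.comp q1)))

lemma gabor_congr {k : ℕ} (f : EuclideanSpace ℝ (Fin (k+1)) → ℂ) (g g' : ℝ → ℂ)
    (hgg' : g =ᵐ[volume] g') (m n : ℝ) (u : EuclideanSpace ℝ (Fin (k+1)))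
    (b : OrthonormalBasis (Fin (k+1)) ℝ (EuclideanSpace ℝ (Fin (k+1)))) (hb : b 0 = u) :
    gaborCoef f g m n u = gaborCoef f g' m n u := by
  unfold gaborCoef
  apply integral_congr_ae
  have := (gabor_qmp_inner u b hb n).ae_eq_comp hgg'
  filter_upwards [this] with x hx
  simp only [Function.comp_apply] at hx
  rw [hx]

/-- Compactly supported smooth functions are Schwartz. -/
def gaborToSchwartz {k : ℕ} (f : EuclideanSpace ℝ (Fin (k+1)) → ℂ)
    (hf : ContDiff ℝ ((⊤ : ℕ∞)) f) (hsupp : HasCompactSupport f) :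
    SchwartzMap (EuclideanSpace ℝ (Fin (k+1))) ℂ where
  toFun := f
  smooth' := hf
  decay' := by
    intro kk nn
    have h1 : Continuous fun x : EuclideanSpace ℝ (Fin (k+1)) =>
        ‖x‖ ^ kk * ‖iteratedFDeriv ℝ nn f x‖ :=
      ((continuous_norm.pow kk).mul
        (hf.continuous_iteratedFDeriv (by exact_mod_cast le_top)).norm)
    have h2 : HasCompactSupport fun x : EuclideanSpace ℝ (Fin (k+1)) =>
        ‖x‖ ^ kk * ‖iteratedFDeriv ℝ nn f x‖ :=
      ((hsupp.iteratedFDeriv nn).norm).mul_left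
    obtain ⟨C, hC⟩ := h1.bounded_above_of_compact_support h2
    exact ⟨C, fun x => (le_abs_self _).trans ((Real.norm_eq_abs _ ▸ hC x))⟩

lemma gabor_exists_bump {k : ℕ} (r : ℝ) (hr : 0 < r) :
    ∃ φ : EuclideanSpace ℝ (Fin (k+1)) → ℂ, ContDiff ℝ ((⊤ : ℕ∞)) φ ∧ HasCompactSupport φ ∧
      Function.support φ ⊆ Metric.ball (0 : EuclideanSpace ℝ (Fin (k+1))) r ∧ φ 0 ≠ 0 := by
  have hb : (0:ℝ) < r/2 := by linarith
  let c : ContDiffBump (0 : EuclideanSpace ℝ (Fin (k+1))) := ⟨r/2, r, hb, by linarith⟩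
  refine ⟨fun x => (c x : ℂ), ?_, ?_, ?_, ?_⟩
  · exact Complex.ofRealCLM.contDiff.comp c.contDiff
  · apply HasCompactSupport.comp_left (g := fun t : ℝ => (t : ℂ)) c.hasCompactSupport
    simp
  · intro x hx
    have : c x ≠ 0 := by
      simp only [Function.mem_support] at hx
      exact_mod_cast hx
    have := Function.mem_support.mpr this
    rwa [c.support_eq] at this
  · simp only [ne_eq, Complex.ofReal_eq_zero]
    have : c 0 = 1 := c.one_of_mem_closedBall (by simp [c, hb.le])
    rw [this]
    norm_num

/-- The main construction, by induction on the finite set of directions. -/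
lemma gabor_exists_good {k : ℕ} (hk : 1 ≤ k) (g' : ℝ → ℂ) (hg'm : StronglyMeasurable g')
    (hg' : MemLp g' 2 volume) (s : Finset (EuclideanSpace ℝ (Fin (k+1)))) :
    ∀ r : ℝ, 0 < r → (∀ u ∈ s, ‖u‖ = 1) →
    ∃ h : EuclideanSpace ℝ (Fin (k+1)) → ℂ, ContDiff ℝ ((⊤ : ℕ∞)) h ∧ HasCompactSupport h ∧
      Function.support h ⊆ Metric.ball (0 : EuclideanSpace ℝ (Fin (k+1))) r ∧ h 0 ≠ 0 ∧
      ∀ u ∈ s, ∀ m n : ℝ, gaborCoef h g' m n u = 0 := by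
  classical
  induction s using Finset.induction_on with
  | empty =>
    intro r hr _
    obtain ⟨φ, h1, h2, h3, h4⟩ := gabor_exists_bump r hr
    exact ⟨φ, h1, h2, h3, h4, fun u hu => absurd hu (Finset.notMem_empty u)⟩
  | @insert u s hus ih =>
    intro r hr hs
    have hu : ‖u‖ = 1 := hs u (Finset.mem_insert_self u s)
    obtain ⟨h, hsm, hcs, hsupp, hne, hcoef⟩ :=
      ih (r/4) (by linarith) (fun v hv => hs v (Finset.mem_insert_of_mem hv))
    obtain ⟨b, hb⟩ := gabor_onb_ext u hu
    set i1 : Fin (k+1) := ⟨1, by omega⟩ with hi1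
    set w : EuclideanSpace ℝ (Fin (k+1)) := (r/2) • b i1 with hwdef
    have hne01 : (0 : Fin (k+1)) ≠ i1 := by
      simp [hi1, Fin.ext_iff]
    have hw_inner : (inner ℝ u w : ℝ) = 0 := by
      rw [hwdef, real_inner_smul_right, ← hb]
      rw [b.orthonormal.2 hne01, mul_zero]
    have hw_norm : ‖w‖ = r/2 := by
      rw [hwdef, norm_smul, b.orthonormal.1 i1, mul_one, Real.norm_eq_abs,
        abs_of_pos (show (0:ℝ) < r/2 by linarith)]
    have hcont : Continuous h := hsm.continuous
    have hzero : ∀ x : EuclideanSpace ℝ (Fin (k+1)), ¬ ‖x‖ < r/4 → h x = 0 := by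
      intro x hx
      by_contra hx0
      exact hx (by simpa [mem_ball_zero_iff] using hsupp (Function.mem_support.mpr hx0))
    have hsupp' : Function.support (fun x : EuclideanSpace ℝ (Fin (k+1)) => h x - h (x - w))
        ⊆ Metric.ball 0 r := by
      intro x hx
      rw [Function.mem_support] at hx
      rw [mem_ball_zero_iff]
      by_contra hxr
      push_neg at hxr
      have h1 : h x = 0 := hzero x (by push_neg; linarith)
      have h2 : h (x - w) = 0 := by
        apply hzero
        push_neg
        have : ‖x‖ - ‖w‖ ≤ ‖x - w‖ := norm_sub_norm_le x w
        rw [hw_norm] at this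
        linarith
      exact hx (by rw [h1, h2, sub_zero])
    have hcs2 : HasCompactSupport (fun x : EuclideanSpace ℝ (Fin (k+1)) => h (x - w)) := by
      apply HasCompactSupport.intro (isCompact_closedBall (0:EuclideanSpace ℝ (Fin (k+1))) r)
      intro x hx
      apply hzero
      intro hlt
      apply hx
      rw [Metric.mem_closedBall, dist_zero_right]
      have : ‖x‖ - ‖w‖ ≤ ‖x - w‖ := norm_sub_norm_le x w
      rw [hw_norm] at this
      linarith
    have hcs' : HasCompactSupport (fun x : EuclideanSpace ℝ (Fin (k+1)) => h x - h (x - w)) :=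
      HasCompactSupport.intro (isCompact_closedBall (0:EuclideanSpace ℝ (Fin (k+1))) r)
        (fun x hx => Function.notMem_support.mp (fun hmem =>
          hx (Metric.ball_subset_closedBall (hsupp' hmem))))
    refine ⟨fun x => h x - h (x - w), ?_, hcs', hsupp', ?_, ?_⟩
    · exact hsm.sub (hsm.comp (contDiff_id.sub contDiff_const))
    · have : h (0 - w) = 0 := by
        apply hzero
        simp only [zero_sub, norm_neg, hw_norm]
        push_neg
        linarith
      show h 0 - h (0 - w) ≠ 0
      rw [this, sub_zero]
      exact hne
    · intro u' hu' m n
      have hu'1 : ‖u'‖ = 1 := hs u' hu'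
      obtain ⟨b', hb'⟩ := gabor_onb_ext u' hu'1
      have hint1 := gabor_integrable_kernel u' hu'1 g' hg'm hg' h hcont hcs m n b' hb'
      have hint2 := gabor_integrable_kernel u' hu'1 g' hg'm hg' (fun x => h (x - w))
        (hcont.comp (continuous_id.sub continuous_const)) hcs2 m n b' hb'
      rw [gabor_sub h (fun x => h (x - w)) g' m n u' hint1 hint2]
      rw [gabor_translate h g' m n u' w]
      rcases Finset.mem_insert.mp hu' with rfl | hmem
      · rw [hw_inner]
        simp
      · rw [hcoef u' hmem m n, hcoef u' hmem m (n - (inner ℝ u' w : ℝ))]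
        simp

end Aux

/-- for `d ≥ 2`, `g ∈ L²(ℝ)`, a countable `Δ ⊂ ℝ × ℝ`, a finite
`Q ⊂ S^{d−1}` and `ε > 0`, there is a Schwartz function `f` supported in `B_ε(0)` with
`‖f‖₂ = 1` all of whose directional Gabor coefficients over `Δ × Q` vanish.
Consequently `{g_{m,n,u}}_{(m,n,u)∈Δ×Q}` is not a frame for any class of functions
containing all Schwartz functions supported in `B_ε(0)`: there are no frame bounds
`0 < A ≤ B` on that class. -/
theorem finitely_many_directions_not_frame {d : ℕ} (hd : 2 ≤ d)
    (g : ℝ → ℂ) (hg : MemLp g 2 volume)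
    (Δ : Set (ℝ × ℝ)) (hΔ : Δ.Countable)
    (Q : Set (EuclideanSpace ℝ (Fin d))) (hQfin : Q.Finite)
    (hQsphere : ∀ u ∈ Q, ‖u‖ = 1) (ε : ℝ) (hε : 0 < ε) :
    (∃ f : SchwartzMap (EuclideanSpace ℝ (Fin d)) ℂ,
      Function.support ⇑f ⊆ Metric.ball (0 : EuclideanSpace ℝ (Fin d)) ε ∧
      (∫ x : EuclideanSpace ℝ (Fin d), ‖f x‖ ^ 2) = 1 ∧
      ∀ p ∈ Δ, ∀ u ∈ Q, gaborCoef (⇑f) g p.1 p.2 u = 0) ∧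
    ¬ ∃ A B : ℝ, 0 < A ∧ A ≤ B ∧
      ∀ f : SchwartzMap (EuclideanSpace ℝ (Fin d)) ℂ,
        Function.support ⇑f ⊆ Metric.ball (0 : EuclideanSpace ℝ (Fin d)) ε →
        A * ∫ x : EuclideanSpace ℝ (Fin d), ‖f x‖ ^ 2 ≤
            (∑' p : Δ, ∑' u : Q, ‖gaborCoef (⇑f) g (p : ℝ × ℝ).1 (p : ℝ × ℝ).2
              (u : EuclideanSpace ℝ (Fin d))‖ ^ 2) ∧
          (∑' p : Δ, ∑' u : Q, ‖gaborCoef (⇑f) g (p : ℝ × ℝ).1 (p : ℝ × ℝ).2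
              (u : EuclideanSpace ℝ (Fin d))‖ ^ 2) ≤
            B * ∫ x : EuclideanSpace ℝ (Fin d), ‖f x‖ ^ 2 := by
  obtain ⟨k, rfl⟩ : ∃ k, d = k + 1 := ⟨d - 1, by omega⟩
  have hk : 1 ≤ k := by omega
  classical
  -- measurable representative of g
  have hgm := hg.aestronglyMeasurable
  set g' : ℝ → ℂ := hgm.mk g with hg'def
  have hg'sm : StronglyMeasurable g' := hgm.stronglyMeasurable_mk
  have hgg' : g =ᵐ[volume] g' := hgm.ae_eq_mk
  have hg'2 : MemLp g' 2 volume := hg.ae_eq hgg'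
  set s : Finset (EuclideanSpace ℝ (Fin (k+1))) := hQfin.toFinset with hsdef
  have hsnorm : ∀ u ∈ s, ‖u‖ = 1 := fun u hu => hQsphere u (hQfin.mem_toFinset.mp hu)
  obtain ⟨f₀, hsm, hcs, hsupp, hne, hcoef⟩ := gabor_exists_good hk g' hg'sm hg'2 s ε hε hsnorm
  have hcont : Continuous f₀ := hsm.continuous
  -- positivity of the L² norm
  have hnormsq_cont : Continuous fun x : EuclideanSpace ℝ (Fin (k+1)) => ‖f₀ x‖ ^ 2 :=
    (hcont.norm).pow 2
  have hnormsq_cs : HasCompactSupport fun x : EuclideanSpace ℝ (Fin (k+1)) => ‖f₀ x‖ ^ 2 := by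
    apply HasCompactSupport.comp_left (g := fun z : ℂ => ‖z‖ ^ 2) hcs
    simp
  have hint : Integrable (fun x : EuclideanSpace ℝ (Fin (k+1)) => ‖f₀ x‖ ^ 2) volume :=
    hnormsq_cont.integrable_of_hasCompactSupport hnormsq_cs
  have hIpos : 0 < ∫ x : EuclideanSpace ℝ (Fin (k+1)), ‖f₀ x‖ ^ 2 :=
    integral_pos_of_integrable_nonneg_nonzero (x := 0) hnormsq_cont hint
      (fun x => sq_nonneg _) (pow_ne_zero 2 (norm_ne_zero_iff.mpr hne))
  set I : ℝ := ∫ x : EuclideanSpace ℝ (Fin (k+1)), ‖f₀ x‖ ^ 2 with hI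
  set c : ℝ := Real.sqrt I⁻¹ with hc
  have hcpos : 0 < c := Real.sqrt_pos.mpr (inv_pos.mpr hIpos)
  have hc2 : c^2 = I⁻¹ := Real.sq_sqrt (inv_nonneg.mpr hIpos.le)
  set φ : SchwartzMap (EuclideanSpace ℝ (Fin (k+1))) ℂ := gaborToSchwartz f₀ hsm hcs with hφ
  set f : SchwartzMap (EuclideanSpace ℝ (Fin (k+1))) ℂ := c • φ with hf
  have hfx : ∀ x, f x = (c : ℂ) * f₀ x := by
    intro x
    rw [hf, SchwartzMap.smul_apply]
    have : φ x = f₀ x := rfl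
    rw [this]
    simp [Complex.real_smul]
  -- the three properties of f
  have hfsupp : Function.support ⇑f ⊆ Metric.ball (0 : EuclideanSpace ℝ (Fin (k+1))) ε := by
    intro x hx
    apply hsupp
    rw [Function.mem_support] at hx ⊢
    intro h0
    exact hx (by rw [hfx x, h0, mul_zero])
  have hfnorm : (∫ x : EuclideanSpace ℝ (Fin (k+1)), ‖f x‖ ^ 2) = 1 := by
    have : (fun x : EuclideanSpace ℝ (Fin (k+1)) => ‖f x‖ ^ 2)
        = fun x => c^2 * ‖f₀ x‖ ^ 2 := by
      ext x
      rw [hfx x, norm_mul, Complex.norm_real, Real.norm_eq_abs, abs_of_pos hcpos, mul_pow]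
    rw [this, integral_const_mul, hc2, ← hI, inv_mul_cancel₀ hIpos.ne']
  have hfcoef : ∀ p ∈ Δ, ∀ u ∈ Q, gaborCoef (⇑f) g p.1 p.2 u = 0 := by
    intro p hp u hu
    have hu1 : ‖u‖ = 1 := hQsphere u hu
    obtain ⟨b, hb⟩ := gabor_onb_ext u hu1
    rw [gabor_congr (⇑f) g g' hgg' p.1 p.2 u b hb]
    have hlin : gaborCoef (⇑f) g' p.1 p.2 u = (c : ℂ) * gaborCoef f₀ g' p.1 p.2 u := by
      unfold gaborCoef
      rw [← integral_const_mul]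
      congr 1
      ext x
      rw [hfx x]
      ring
    rw [hlin, hcoef u (hQfin.mem_toFinset.mpr hu) p.1 p.2, mul_zero]
  refine ⟨⟨f, hfsupp, hfnorm, hfcoef⟩, ?_⟩
  rintro ⟨A, B, hA, hAB, hbound⟩
  obtain ⟨h1, h2⟩ := hbound f hfsupp
  rw [hfnorm, mul_one] at h1
  have hzero : (∑' p : Δ, ∑' u : Q, ‖gaborCoef (⇑f) g (p : ℝ × ℝ).1 (p : ℝ × ℝ).2
      (u : EuclideanSpace ℝ (Fin (k+1)))‖ ^ 2) = 0 := by
    have hterm : ∀ (p : Δ) (u : Q), ‖gaborCoef (⇑f) g (p : ℝ × ℝ).1 (p : ℝ × ℝ).2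
        (u : EuclideanSpace ℝ (Fin (k+1)))‖ ^ 2 = 0 := by
      intro p u
      rw [hfcoef p p.2 u u.2, norm_zero]
      norm_num
    calc (∑' p : Δ, ∑' u : Q, ‖gaborCoef (⇑f) g (p : ℝ × ℝ).1 (p : ℝ × ℝ).2
        (u : EuclideanSpace ℝ (Fin (k+1)))‖ ^ 2)
        = ∑' _p : Δ, (0:ℝ) := by
          apply tsum_congr
          intro p
          rw [show (fun u : Q => ‖gaborCoef (⇑f) g (p : ℝ × ℝ).1 (p : ℝ × ℝ).2
            (u : EuclideanSpace ℝ (Fin (k+1)))‖ ^ 2) = fun _ => (0:ℝ) from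
            funext (fun u => hterm p u)]
          exact tsum_zero
      _ = 0 := tsum_zero
  rw [hzero] at h1
  linarith

end
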